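/- Let X be a β-set, d ≥ 1, and S = s_d(X) the associated d-symbol. Let δ* = (0, 1, …, d−1; d) be the partition d-hook data tuple. Then the multiset 𝓗(X) of hook lengths of X equals the multiset 𝓗^{δ*}(S) of δ*-lengths of the hooks of S. -/
import Mathlib


/-- `X^{+s} = (X + s) ∪ {0,…,s−1}` for a β-set `X`. -/
def shiftUp (X : Finset ℕ) (s : ℕ) : Finset ℕ :=
  X.image (· + s) ∪ Finset.range s

/-- The `d`-symbol `s_d(X)` associated to a β-set `X`:
`X_i^{(d)} = {k ∈ ℕ : i + k*d ∈ X}`. -/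
def sd (d : ℕ) (X : Finset ℕ) : Fin d → Finset ℕ :=
  fun i => (X.filter fun a => a % d = (i : ℕ)).image fun a => a / d

/-- The inverse of `s_d`, recovering the β-set of a `d`-symbol. -/
def sdInv (d : ℕ) (S : Fin d → Finset ℕ) : Finset ℕ :=
  Finset.univ.biUnion fun i => (S i).image fun k => (i : ℕ) + k * d

/-- Hooks of a β-set `X`: pairs `(a,b)` with `a > b`, `a ∈ X`, `b ∉ X`. -/
def betaHooks (X : Finset ℕ) : Finset (ℕ × ℕ) :=
  (X ×ˢ Finset.range (X.sup id + 1)).filter fun p => p.2 < p.1 ∧ p.2 ∉ X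

/-- Hooks of a `d`-symbol `S`: quadruples `(a,b,i,j)` with `a ∈ S i`, `b ∉ S j`,
and either `a > b`, or `a = b` and `i > j`. -/
def symbolHooks {d : ℕ} (S : Fin d → Finset ℕ) : Finset (ℕ × ℕ × Fin d × Fin d) :=
  (Finset.range ((Finset.univ.sup fun i => (S i).sup id) + 1) ×ˢ
      Finset.range ((Finset.univ.sup fun i => (S i).sup id) + 1) ×ˢ
      (Finset.univ : Finset (Fin d)) ×ˢ (Finset.univ : Finset (Fin d))).filter
    fun z => z.1 ∈ S z.2.2.1 ∧ z.2.1 ∉ S z.2.2.2 ∧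
      (z.2.1 < z.1 ∨ (z.1 = z.2.1 ∧ z.2.2.2 < z.2.2.1))

/-- The partition `p(X)` of a β-set `X = {a_1 > … > a_t}`, as the multiset of the
nonzero numbers among `a_i − (t−i)`; the element `a` contributes the part
`a − #{b ∈ X : b < a}`. -/
def partitionOf (X : Finset ℕ) : Multiset ℕ :=
  Multiset.filter (· ≠ 0) (X.val.map fun a => a - (X.filter (· < a)).card)

/-- `r`, the maximal number of parts among the partitions `p(X_i)` of a `d`-symbol. -/
def quotCard {d : ℕ} (S : Fin d → Finset ℕ) : ℕ :=
  Finset.univ.sup fun i => Multiset.card (partitionOf (S i))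

/-- `Y` is the balanced quotient `Q(S)` of `S`: each `Y i` is the (unique) β-set of
cardinality `r` with `p(Y i) = p(S i)`, where `r` is the maximal number of parts
among the `p(S i)`. -/
def IsBalancedQuotient {d : ℕ} (S Y : Fin d → Finset ℕ) : Prop :=
  ∀ i, (Y i).card = quotCard S ∧ partitionOf (Y i) = partitionOf (S i)

/-- The core `C(S) = ([x_0],…,[x_{d−1}])` of a `d`-symbol, `x_i = |X_i|`. -/
def coreSymbol {d : ℕ} (S : Fin d → Finset ℕ) : Fin d → Finset ℕ :=
  fun i => Finset.range (S i).card

/-- The `δ`-length `k(a−b) + c_i − c_j` of a hook `(a,b,i,j)`, for the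
`d`-hook data tuple `δ = (c_0,…,c_{d−1};k)`. -/
noncomputable def hookLen {d : ℕ} (c : Fin d → ℝ) (k : ℝ)
    (z : ℕ × ℕ × Fin d × Fin d) : ℝ :=
  k * ((z.1 - z.2.1 : ℕ) : ℝ) + c z.2.2.1 - c z.2.2.2

/-- The multiset `𝓗^δ(S)` of `δ`-lengths of all hooks of `S`. -/
noncomputable def hookLens {d : ℕ} (c : Fin d → ℝ) (k : ℝ)
    (S : Fin d → Finset ℕ) : Multiset ℝ :=
  (symbolHooks S).val.map (hookLen c k)

/-- `H_{ij}^ℓ(S)`, the set of hooks `(a,b,i,j)` of `S` with `a − b = ℓ`. -/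
def Hij {d : ℕ} (S : Fin d → Finset ℕ) (i j : Fin d) (ℓ : ℕ) :
    Finset (ℕ × ℕ × Fin d × Fin d) :=
  (symbolHooks S).filter fun z => z.2.2.1 = i ∧ z.2.2.2 = j ∧ z.1 - z.2.1 = ℓ

/-- The sign-modified length `h̄^{δ_S}` (on hooks of the balanced quotient), where
`x` records the cardinalities `x_i = |X_i|` of `S`, and `δ_S = (c_i + x_i k; k)`.
For a hook `z = (a,b,u,v)` with `ℓ = a − b`: relabelling so that `Δ = x_i − x_j ≥ 0`,
the sign is `+` if `z` lies in position `(i,j)`, or in position `(j,i)` with `ℓ > Δ`,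
or in position `(j,i)` with `ℓ = Δ` and `i < j`; otherwise the sign is `−`. -/
noncomputable def signedLen {d : ℕ} (x : Fin d → ℕ) (c : Fin d → ℝ) (k : ℝ)
    (z : ℕ × ℕ × Fin d × Fin d) : ℝ :=
  if x z.2.2.2 ≤ x z.2.2.1 then
    k * ((z.1 - z.2.1 : ℕ) : ℝ) + (c z.2.2.1 + (x z.2.2.1 : ℝ) * k)
      - (c z.2.2.2 + (x z.2.2.2 : ℝ) * k)
  else if x z.2.2.2 - x z.2.2.1 < z.1 - z.2.1 ∨
      (z.1 - z.2.1 = x z.2.2.2 - x z.2.2.1 ∧ (z.2.2.2 : ℕ) < (z.2.2.1 : ℕ)) then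
    k * ((z.1 - z.2.1 : ℕ) : ℝ) + (c z.2.2.1 + (x z.2.2.1 : ℝ) * k)
      - (c z.2.2.2 + (x z.2.2.2 : ℝ) * k)
  else
    -(k * ((z.1 - z.2.1 : ℕ) : ℝ) + (c z.2.2.1 + (x z.2.2.1 : ℝ) * k)
      - (c z.2.2.2 + (x z.2.2.2 : ℝ) * k))

/-- The permutation `σ_{d,ℓ,e}` of `ℕ`:
`σ(r(dℓ) + sd + t) = r(dℓ) + sd + ((t + re) mod d)`. -/
def twistFun (d ℓ e : ℕ) (n : ℕ) : ℕ :=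
  d * ℓ * (n / (d * ℓ)) + d * (n % (d * ℓ) / d) + (n % d + n / (d * ℓ) * e) % d

/-- The natural map sending a hook `(a,b)` of `X` to a hook of `s_d(X)`. -/
def hmap (d : ℕ) (hd : 0 < d) (p : ℕ × ℕ) : ℕ × ℕ × Fin d × Fin d :=
  (p.1 / d, p.2 / d, ⟨p.1 % d, Nat.mod_lt _ hd⟩, ⟨p.2 % d, Nat.mod_lt _ hd⟩)

lemma hmap_inj (d : ℕ) (hd : 0 < d) : Function.Injective (hmap d hd) := by
  intro p q h
  simp only [hmap, Prod.ext_iff, Fin.mk.injEq] at h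
  obtain ⟨h1, h2, h3, h4⟩ := h
  have : p.1 = q.1 := by
    rw [← Nat.div_add_mod p.1 d, ← Nat.div_add_mod q.1 d, h1, h3]
  have : p.2 = q.2 := by
    rw [← Nat.div_add_mod p.2 d, ← Nat.div_add_mod q.2 d, h2, h4]
  exact Prod.ext ‹p.1 = q.1› ‹p.2 = q.2›

lemma mem_sd {d : ℕ} (hd : 0 < d) (X : Finset ℕ) (i : Fin d) (k : ℕ) :
    k ∈ sd d X i ↔ (i : ℕ) + k * d ∈ X := by
  simp only [sd, Finset.mem_image, Finset.mem_filter]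
  constructor
  · rintro ⟨a, ⟨ha, hmod⟩, hdiv⟩
    rw [← hmod, ← hdiv, Nat.mod_add_div']
    exact ha
  · intro h
    refine ⟨(i : ℕ) + k * d, ⟨h, ?_⟩, ?_⟩
    · rw [Nat.add_mul_mod_self_right, Nat.mod_eq_of_lt i.isLt]
    · rw [Nat.add_mul_div_right _ _ hd, Nat.div_eq_of_lt i.isLt, Nat.zero_add]

lemma mem_betaHooks (X : Finset ℕ) (p : ℕ × ℕ) :
    p ∈ betaHooks X ↔ p.1 ∈ X ∧ p.2 < p.1 ∧ p.2 ∉ X := by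
  simp only [betaHooks, Finset.mem_filter, Finset.mem_product, Finset.mem_range]
  constructor
  · tauto
  · rintro ⟨h1, h2, h3⟩
    have := Finset.le_sup (f := id) h1
    exact ⟨⟨h1, by simp only [id] at this; omega⟩, h2, h3⟩

lemma mem_symbolHooks {d : ℕ} (S : Fin d → Finset ℕ) (z : ℕ × ℕ × Fin d × Fin d) :
    z ∈ symbolHooks S ↔ z.1 ∈ S z.2.2.1 ∧ z.2.1 ∉ S z.2.2.2 ∧
      (z.2.1 < z.1 ∨ (z.1 = z.2.1 ∧ z.2.2.2 < z.2.2.1)) := by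
  simp only [symbolHooks, Finset.mem_filter, Finset.mem_product, Finset.mem_range,
    Finset.mem_univ, and_true, true_and]
  constructor
  · tauto
  · rintro ⟨h1, h2, h3⟩
    have ha : z.1 ≤ Finset.univ.sup fun i => (S i).sup id := by
      have h := Finset.le_sup (f := id) h1
      simp only [id] at h
      exact le_trans h (Finset.le_sup (f := fun i => (S i).sup id) (Finset.mem_univ z.2.2.1))
    have hb : z.2.1 ≤ z.1 := by rcases h3 with h | ⟨h, _⟩ <;> omega
    exact ⟨⟨by omega, by omega⟩, h1, h2, h3⟩

lemma hmap_image (d : ℕ) (hd : 0 < d) (X : Finset ℕ) :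
    (betaHooks X).image (hmap d hd) = symbolHooks (sd d X) := by
  ext z
  simp only [Finset.mem_image, mem_betaHooks, mem_symbolHooks]
  constructor
  · rintro ⟨p, ⟨h1, h2, h3⟩, rfl⟩
    refine ⟨?_, ?_, ?_⟩
    · rw [hmap, mem_sd hd]
      simpa [Nat.mod_add_div'] using h1
    · rw [hmap, mem_sd hd]
      simpa [Nat.mod_add_div'] using h3
    · simp only [hmap]
      have e1 := Nat.div_add_mod p.1 d
      have e2 := Nat.div_add_mod p.2 d
      have hm1 : p.1 % d < d := Nat.mod_lt _ hd
      have hm2 : p.2 % d < d := Nat.mod_lt _ hd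
      rcases lt_trichotomy (p.2 / d) (p.1 / d) with h | h | h
      · exact Or.inl h
      · refine Or.inr ⟨h.symm, ?_⟩
        simp only [Fin.lt_def]
        have hq : d * (p.1 / d) = d * (p.2 / d) := by rw [h]
        omega
      · have := Nat.div_le_div_right (c := d) h2.le
        omega
  · rintro ⟨h1, h2, h3⟩
    obtain ⟨k, l, i, j⟩ := z
    simp only at h1 h2 h3 ⊢
    rw [mem_sd hd] at h1 h2
    refine ⟨((i : ℕ) + k * d, (j : ℕ) + l * d), ⟨h1, ?_, h2⟩, ?_⟩
    · have hi := i.isLt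
      have hj := j.isLt
      rcases h3 with h | ⟨h, h'⟩
      · have : l * d + d ≤ k * d := by
          have h' : (l + 1) * d ≤ k * d := Nat.mul_le_mul_right d h
          rwa [add_mul, one_mul] at h'
        omega
      · simp only [Fin.lt_def] at h'
        subst h
        omega
    · simp only [hmap, Prod.ext_iff]
      have hi := i.isLt
      have hj := j.isLt
      refine ⟨?_, ?_, ?_, ?_⟩
      · rw [Nat.add_mul_div_right _ _ hd, Nat.div_eq_of_lt hi, Nat.zero_add]
      · rw [Nat.add_mul_div_right _ _ hd, Nat.div_eq_of_lt hj, Nat.zero_add]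
      · ext; simp [Nat.add_mul_mod_self_right, Nat.mod_eq_of_lt hi]
      · ext; simp [Nat.add_mul_mod_self_right, Nat.mod_eq_of_lt hj]

/-- With the partition `d`-hook data tuple `δ* = (0,1,…,d−1; d)`, the multiset of
hook lengths of a β-set `X` equals the multiset of `δ*`-lengths of the hooks of
the associated `d`-symbol `s_d(X)`. -/
theorem hookLens_beta_eq_partition_tuple (d : ℕ) (hd : 0 < d) (X : Finset ℕ) :
    (betaHooks X).val.map (fun p => ((p.1 - p.2 : ℕ) : ℝ)) =
      hookLens (fun i => ((i : ℕ) : ℝ)) (d : ℝ) (sd d X) := by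
  have himg : ((betaHooks X).image (hmap d hd)).val = (betaHooks X).val.map (hmap d hd) :=
    Finset.image_val_of_injOn ((hmap_inj d hd).injOn)
  rw [hookLens, ← hmap_image d hd X, himg, Multiset.map_map]
  refine Multiset.map_congr rfl ?_
  intro p hp
  rw [← Finset.mem_def, mem_betaHooks] at hp
  obtain ⟨h1, h2, h3⟩ := hp
  simp only [Function.comp_apply, hookLen, hmap]
  have e1 := Nat.div_add_mod p.1 d
  have e2 := Nat.div_add_mod p.2 d
  have hdiv : p.2 / d ≤ p.1 / d := Nat.div_le_div_right h2.le
  rw [Nat.cast_sub h2.le, Nat.cast_sub hdiv]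
  have c1 : ((p.1 : ℝ)) = d * (p.1 / d : ℕ) + (p.1 % d : ℕ) := by exact_mod_cast e1.symm
  have c2 : ((p.2 : ℝ)) = d * (p.2 / d : ℕ) + (p.2 % d : ℕ) := by exact_mod_cast e2.symm
  rw [c1, c2]
  ring
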